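/- Let f and (f_n) be meromorphic functions on ℂ (valued in the Riemann sphere), f non-constant, and f_n → f locally uniformly on ℂ with respect to the spherical metric. If a₀ ∈ ℂ, then there exist N ∈ ℕ and points a_n ∈ ℂ for n ≥ N such that f_n(a_n) = f(a₀) and a_n → a₀ as n → ∞. -/

import Mathlib

open OnePoint

/-- The chordal (spherical) metric on the Riemann sphere `ℂ̂ = ℂ ∪ {∞}`. -/
noncomputable def sphDist : OnePoint ℂ → OnePoint ℂ → ℝ
  | OnePoint.infty, OnePoint.infty => 0
  | OnePoint.infty, OnePoint.some w => 2 / Real.sqrt (1 + ‖w‖ ^ 2)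
  | OnePoint.some z, OnePoint.infty => 2 / Real.sqrt (1 + ‖z‖ ^ 2)
  | OnePoint.some z, OnePoint.some w =>
      2 * ‖z - w‖ /
        (Real.sqrt (1 + ‖z‖ ^ 2) * Real.sqrt (1 + ‖w‖ ^ 2))

/-- The point `a/b ∈ ℂ̂`, with value `∞` when `b = 0`. -/
noncomputable def sphDiv (a b : ℂ) : OnePoint ℂ :=
  if b = 0 then OnePoint.infty else OnePoint.some (a / b)

/-- `f : ℂ → ℂ̂` is meromorphic: near each point it is the quotient of two analytic
functions, not both vanishing there. -/
def SphMeromorphic (f : ℂ → OnePoint ℂ) : Prop :=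
  ∀ z₀ : ℂ, ∃ g h : ℂ → ℂ, AnalyticAt ℂ g z₀ ∧ AnalyticAt ℂ h z₀ ∧
    (g z₀ ≠ 0 ∨ h z₀ ≠ 0) ∧ ∀ᶠ z in nhds z₀, f z = sphDiv (g z) (h z)


noncomputable def inv1 : OnePoint ℂ → OnePoint ℂ
  | OnePoint.infty => OnePoint.some 0
  | OnePoint.some z => if z = 0 then OnePoint.infty else OnePoint.some z⁻¹

lemma inv1_inv1 (x : OnePoint ℂ) : inv1 (inv1 x) = x := by
  cases x with
  | infty => simp [inv1]
  | coe z =>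
    by_cases hz : z = 0
    · simp [inv1, hz]
    · simp [inv1, hz, inv_eq_zero]

lemma sqrt_aux (z : ℂ) (hz : z ≠ 0) :
    Real.sqrt (1 + (‖z‖)⁻¹ ^ 2) = Real.sqrt (1 + ‖z‖ ^ 2) / ‖z‖ := by
  have h0 : (0:ℝ) < ‖z‖ := norm_pos_iff.mpr hz
  rw [show (1 : ℝ) + (‖z‖)⁻¹ ^ 2 = (1 + ‖z‖ ^ 2) / ‖z‖ ^ 2 by
    field_simp; ring]
  rw [Real.sqrt_div (by positivity), Real.sqrt_sq h0.le]

lemma sphDist_inv1_some_some (z w : ℂ) (hz : z ≠ 0) (hw : w ≠ 0) :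
    sphDist (inv1 (OnePoint.some z)) (inv1 (OnePoint.some w))
      = sphDist (OnePoint.some z) (OnePoint.some w) := by
  have h0z : (0:ℝ) < ‖z‖ := norm_pos_iff.mpr hz
  have h0w : (0:ℝ) < ‖w‖ := norm_pos_iff.mpr hw
  simp only [inv1, if_neg hz, if_neg hw]
  show 2 * ‖z⁻¹ - w⁻¹‖ / _ = _
  rw [show z⁻¹ - w⁻¹ = (w - z) / (z * w) by field_simp]
  rw [norm_div, norm_mul, norm_inv, norm_inv, sqrt_aux z hz, sqrt_aux w hw]
  rw [show ‖w - z‖ = ‖z - w‖ by rw [← norm_neg, neg_sub]]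
  show _ = 2 * ‖z - w‖ / _
  field_simp

lemma sphDist_inv1 (x y : OnePoint ℂ) : sphDist (inv1 x) (inv1 y) = sphDist x y := by
  cases x with
  | infty =>
    cases y with
    | infty => simp [inv1, sphDist]
    | coe w =>
      by_cases hw : w = 0
      · simp [inv1, hw, sphDist]
      · simp only [inv1, if_neg hw]
        show 2 * ‖0 - w⁻¹‖ / (Real.sqrt (1 + ‖(0:ℂ)‖ ^ 2) * Real.sqrt (1 + ‖w⁻¹‖ ^ 2)) = 2 / Real.sqrt (1 + ‖w‖ ^ 2)
        rw [zero_sub, norm_neg, norm_inv, sqrt_aux w hw]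
        have h0w : (0:ℝ) < ‖w‖ := norm_pos_iff.mpr hw
        simp only [norm_zero]
        rw [show (0:ℝ)^2 = 0 by ring, add_zero, Real.sqrt_one]
        field_simp
  | coe z =>
    cases y with
    | infty =>
      by_cases hz : z = 0
      · simp [inv1, hz, sphDist]
      · simp only [inv1, if_neg hz]
        show 2 * ‖z⁻¹ - 0‖ / (Real.sqrt (1 + ‖z⁻¹‖ ^ 2) * Real.sqrt (1 + ‖(0:ℂ)‖ ^ 2)) = 2 / Real.sqrt (1 + ‖z‖ ^ 2)
        rw [sub_zero, norm_inv, sqrt_aux z hz]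
        have h0z : (0:ℝ) < ‖z‖ := norm_pos_iff.mpr hz
        simp only [norm_zero]
        rw [show (0:ℝ)^2 = 0 by ring, add_zero, Real.sqrt_one]
        field_simp
    | coe w =>
      by_cases hz : z = 0
      · by_cases hw : w = 0
        · simp [inv1, hz, hw, sphDist]
        · subst hz
          simp only [inv1, if_pos rfl, if_neg hw]
          show sphDist OnePoint.infty (OnePoint.some w⁻¹) = _
          rw [show sphDist (OnePoint.some 0) (OnePoint.some w) = 2 * ‖(0:ℂ) - w‖ / (Real.sqrt (1 + ‖(0:ℂ)‖ ^ 2) * Real.sqrt (1 + ‖w‖ ^ 2)) from rfl]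
          show 2 / Real.sqrt (1 + ‖w⁻¹‖ ^ 2) = _
          rw [norm_inv, sqrt_aux w hw, zero_sub, norm_neg]
          have h0w : (0:ℝ) < ‖w‖ := norm_pos_iff.mpr hw
          simp only [norm_zero]
          rw [show (0:ℝ)^2 = 0 by ring, add_zero, Real.sqrt_one]
          field_simp
      · by_cases hw : w = 0
        · subst hw
          simp only [inv1, if_pos rfl, if_neg hz]
          show sphDist (OnePoint.some z⁻¹) OnePoint.infty = _
          rw [show sphDist (OnePoint.some z) (OnePoint.some 0) = 2 * ‖z - 0‖ / (Real.sqrt (1 + ‖z‖ ^ 2) * Real.sqrt (1 + ‖(0:ℂ)‖ ^ 2)) from rfl]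
          show 2 / Real.sqrt (1 + ‖z⁻¹‖ ^ 2) = _
          rw [norm_inv, sqrt_aux z hz, sub_zero]
          have h0z : (0:ℝ) < ‖z‖ := norm_pos_iff.mpr hz
          simp only [norm_zero]
          rw [show (0:ℝ)^2 = 0 by ring, add_zero, Real.sqrt_one]
          field_simp
        · exact sphDist_inv1_some_some z w hz hw

def toC : OnePoint ℂ → ℂ
  | OnePoint.infty => 0
  | OnePoint.some z => z

@[simp] lemma toC_some (z : ℂ) : toC (OnePoint.some z) = z := rfl

lemma eq_some_toC {x : OnePoint ℂ} (h : x ≠ OnePoint.infty) : x = OnePoint.some (toC x) := by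
  cases x with
  | infty => exact absurd rfl h
  | coe z => rfl

lemma sphDist_some_some (z w : ℂ) : sphDist (OnePoint.some z) (OnePoint.some w)
    = 2 * ‖z - w‖ /
        (Real.sqrt (1 + ‖z‖ ^ 2) * Real.sqrt (1 + ‖w‖ ^ 2)) := rfl

lemma sphDist_infty_some (w : ℂ) : sphDist OnePoint.infty (OnePoint.some w)
    = 2 / Real.sqrt (1 + ‖w‖ ^ 2) := rfl

lemma sq1_pos (x : ℝ) : 0 < Real.sqrt (1 + x ^ 2) := Real.sqrt_pos.mpr (by positivity)

lemma sq1_le (x : ℝ) (hx : 0 ≤ x) : Real.sqrt (1 + x ^ 2) ≤ 1 + x := by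
  rw [show (1 : ℝ) + x = Real.sqrt ((1 + x) ^ 2) by rw [Real.sqrt_sq (by linarith)]]
  exact Real.sqrt_le_sqrt (by nlinarith)

lemma sq1_mono {x y : ℝ} (h : x ≤ y) (hx : 0 ≤ x) : Real.sqrt (1 + x ^ 2) ≤ Real.sqrt (1 + y ^ 2) :=
  Real.sqrt_le_sqrt (by nlinarith)

lemma stepA {x : OnePoint ℂ} {b : ℂ} {M : ℝ} (hM : 0 ≤ M) (hb : ‖b‖ ≤ M)
    (h : sphDist x (OnePoint.some b) < 1 / Real.sqrt (1 + M ^ 2)) :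
    x ≠ OnePoint.infty ∧ ‖toC x‖ ≤ 2 * M + 1 := by
  have hbpos := sq1_pos (‖b‖)
  have hMpos := sq1_pos M
  have hble : Real.sqrt (1 + ‖b‖ ^ 2) ≤ Real.sqrt (1 + M ^ 2) :=
    sq1_mono hb (norm_nonneg b)
  cases x with
  | infty =>
    exfalso
    rw [sphDist_infty_some] at h
    have h1 : 1 / Real.sqrt (1 + M ^ 2) ≤ 2 / Real.sqrt (1 + ‖b‖ ^ 2) := by
      rw [div_le_div_iff₀ hMpos hbpos]
      nlinarith
    linarith
  | coe a =>
    refine ⟨by simp, ?_⟩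
    by_contra hcon
    push_neg at hcon
    have ha : (2 : ℝ) * M + 1 ≤ ‖a‖ := by simpa using hcon.le
    have hapos := sq1_pos (‖a‖)
    rw [sphDist_some_some] at h
    have hab : ‖a‖ - M ≤ ‖a - b‖ := by
      have h1 : ‖a‖ - ‖b‖ ≤ ‖a - b‖ := norm_sub_norm_le a b
      linarith
    have hale : Real.sqrt (1 + ‖a‖ ^ 2) ≤ 1 + ‖a‖ :=
      sq1_le _ (norm_nonneg a)
    have key : 1 / Real.sqrt (1 + M ^ 2) ≤
        2 * ‖a - b‖ / (Real.sqrt (1 + ‖a‖ ^ 2) * Real.sqrt (1 + ‖b‖ ^ 2)) := by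
      rw [div_le_div_iff₀ hMpos (by positivity)]
      have h1 : Real.sqrt (1 + ‖a‖ ^ 2) * Real.sqrt (1 + ‖b‖ ^ 2)
          ≤ (1 + ‖a‖) * Real.sqrt (1 + M ^ 2) :=
        mul_le_mul hale hble hbpos.le (by linarith [norm_nonneg a])
      have h2 : (1 + ‖a‖) * Real.sqrt (1 + M ^ 2)
          ≤ (2 * (‖a‖ - M)) * Real.sqrt (1 + M ^ 2) :=
        mul_le_mul_of_nonneg_right (by linarith) hMpos.le
      have h3 : (2 * (‖a‖ - M)) * Real.sqrt (1 + M ^ 2)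
          ≤ 2 * ‖a - b‖ * Real.sqrt (1 + M ^ 2) :=
        mul_le_mul_of_nonneg_right (by linarith) hMpos.le
      linarith
    linarith

lemma stepB {a b : ℂ} {A B : ℝ} (hA : ‖a‖ ≤ A) (hB : ‖b‖ ≤ B) :
    ‖a - b‖ ≤ sphDist (OnePoint.some a) (OnePoint.some b)
      * (Real.sqrt (1 + A ^ 2) * Real.sqrt (1 + B ^ 2)) / 2 := by
  have hapos := sq1_pos (‖a‖)
  have hbpos := sq1_pos (‖b‖)
  have heq : ‖a - b‖ = sphDist (OnePoint.some a) (OnePoint.some b)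
      * (Real.sqrt (1 + ‖a‖ ^ 2) * Real.sqrt (1 + ‖b‖ ^ 2)) / 2 := by
    rw [sphDist_some_some]
    field_simp
  rw [heq]
  have hd : 0 ≤ sphDist (OnePoint.some a) (OnePoint.some b) := by
    rw [sphDist_some_some]; positivity
  have h1 : Real.sqrt (1 + ‖a‖ ^ 2) ≤ Real.sqrt (1 + A ^ 2) :=
    sq1_mono hA (norm_nonneg a)
  have h2 : Real.sqrt (1 + ‖b‖ ^ 2) ≤ Real.sqrt (1 + B ^ 2) :=
    sq1_mono hB (norm_nonneg b)
  gcongr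

lemma sphDist_nonneg' (x y : OnePoint ℂ) : 0 ≤ sphDist x y := by
  cases x with
  | infty => cases y with
    | infty => simp [sphDist]
    | coe w => rw [sphDist_infty_some]; positivity
  | coe z => cases y with
    | infty => show (0:ℝ) ≤ 2 / Real.sqrt (1 + ‖z‖ ^ 2); positivity
    | coe w => rw [sphDist_some_some]; positivity

lemma inv1_meromorphic {f : ℂ → OnePoint ℂ} (hf : SphMeromorphic f) :
    SphMeromorphic (fun z => inv1 (f z)) := by
  intro z₀
  obtain ⟨g, h, hg, hh, hne, hev⟩ := hf z₀
  refine ⟨h, g, hh, hg, hne.symm, ?_⟩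
  have hnb : ∀ᶠ z in nhds z₀, g z ≠ 0 ∨ h z ≠ 0 := by
    rcases hne with hne | hne
    · exact (hg.continuousAt.eventually_ne hne).mono fun z hz => Or.inl hz
    · exact (hh.continuousAt.eventually_ne hne).mono fun z hz => Or.inr hz
  filter_upwards [hev, hnb] with z hz hnz
  rw [hz]
  by_cases hhz : h z = 0
  · have hgz : g z ≠ 0 := hnz.resolve_right (by simp [hhz])
    simp [sphDiv, hhz, hgz, inv1]
  · by_cases hgz : g z = 0
    · simp [sphDiv, hhz, hgz, inv1]
    · have : g z / h z ≠ 0 := div_ne_zero hgz hhz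
      simp only [sphDiv, if_neg hhz, if_neg hgz, inv1, if_neg this]
      rw [inv_div]

lemma fin_analytic {f : ℂ → OnePoint ℂ} (hf : SphMeromorphic f) {z₁ : ℂ}
    (h1 : f z₁ ≠ OnePoint.infty) :
    AnalyticAt ℂ (fun z => toC (f z)) z₁ ∧ ∀ᶠ z in nhds z₁, f z = OnePoint.some (toC (f z)) := by
  obtain ⟨g, h, hg, hh, hne, hev⟩ := hf z₁
  have hz₁ : f z₁ = sphDiv (g z₁) (h z₁) := hev.self_of_nhds
  have hh1 : h z₁ ≠ 0 := by
    intro h0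
    rw [hz₁] at h1
    simp [sphDiv, h0] at h1
  have hhev : ∀ᶠ z in nhds z₁, h z ≠ 0 := hh.continuousAt.eventually_ne hh1
  have hkey : ∀ᶠ z in nhds z₁, f z = OnePoint.some (g z / h z) := by
    filter_upwards [hev, hhev] with z hz hnz
    rw [hz]; simp [sphDiv, hnz]
  constructor
  · refine ((hg.div hh hh1).congr ?_)
    filter_upwards [hkey] with z hz
    rw [hz]; simp
  · filter_upwards [hkey] with z hz
    rw [hz]; simp

lemma not_loc_const {f : ℂ → OnePoint ℂ} (hf : SphMeromorphic f)
    (hnc : ∃ u v : ℂ, f u ≠ f v) (a₀ : ℂ) : ¬ ∀ᶠ z in nhds a₀, f z = f a₀ := by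
  intro hev
  set S : Set ℂ := {z | ∀ᶠ w in nhds z, f w = f a₀} with hS
  have hopen : IsOpen S := isOpen_setOf_eventually_nhds
  have hclosed : IsClosed S := by
    apply isClosed_of_closure_subset
    intro z hz
    by_cases hzS : z ∈ S
    · exact hzS
    have hfreq : ∃ᶠ w in nhdsWithin z {z}ᶜ, w ∈ S := by
      rw [frequently_nhdsWithin_iff]
      exact (mem_closure_iff_frequently.mp hz).mono fun w hw =>
        ⟨hw, fun he => hzS (Set.mem_singleton_iff.mp he ▸ hw)⟩
    obtain ⟨g, h, hg, hh, hne, hev'⟩ := hf z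
    have hev'' : ∀ᶠ w in nhdsWithin z {z}ᶜ, f w = sphDiv (g w) (h w) :=
      nhdsWithin_le_nhds hev'
    cases hfa : f a₀ with
    | infty =>
      -- on S, h vanishes
      have hfz : ∃ᶠ w in nhdsWithin z {z}ᶜ, h w = 0 := by
        refine (hfreq.and_eventually hev'').mono fun w ⟨hwS, hwrep⟩ => ?_
        have : f w = OnePoint.infty := hfa ▸ hwS.self_of_nhds
        rw [hwrep] at this
        by_contra hw0
        simp [sphDiv, hw0] at this
      have hzero : ∀ᶠ w in nhds z, h w = 0 :=
        (hh.frequently_zero_iff_eventually_zero).mp hfz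
      show z ∈ S
      filter_upwards [hev', hzero] with w hw1 hw2
      rw [hw1, hfa]
      simp [sphDiv, hw2]
    | coe c =>
      have hfz : ∃ᶠ w in nhdsWithin z {z}ᶜ, g w - c * h w = 0 := by
        refine (hfreq.and_eventually hev'').mono fun w ⟨hwS, hwrep⟩ => ?_
        have hfw : f w = OnePoint.some c := hfa ▸ hwS.self_of_nhds
        rw [hwrep] at hfw
        by_cases hw0 : h w = 0
        · simp [sphDiv, hw0] at hfw
        · simp only [sphDiv, if_neg hw0] at hfw
          have : g w / h w = c := by simpa using hfw
          field_simp [hw0] at this ⊢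
          linear_combination this
      have hzero : ∀ᶠ w in nhds z, g w - c * h w = 0 :=
        ((hg.sub (analyticAt_const.mul hh)).frequently_zero_iff_eventually_zero).mp hfz
      have hz0 : g z = c * h z := by
        have h0 := hzero.self_of_nhds; linear_combination h0
      have hhz : h z ≠ 0 := by
        intro h0
        rcases hne with hne | hne
        · exact hne (by rw [hz0, h0, mul_zero])
        · exact hne h0
      have hhev : ∀ᶠ w in nhds z, h w ≠ 0 := hh.continuousAt.eventually_ne hhz
      show z ∈ S
      filter_upwards [hev', hzero, hhev] with w hw1 hw2 hw3
      rw [hw1, hfa]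
      simp only [sphDiv, if_neg hw3]
      congr 1
      field_simp
      linear_combination hw2
  have hSuniv : S = Set.univ := IsClopen.eq_univ ⟨hclosed, hopen⟩ ⟨a₀, hev⟩
  obtain ⟨u, v, huv⟩ := hnc
  have hu : f u = f a₀ := (hSuniv ▸ Set.mem_univ u : u ∈ S).self_of_nhds
  have hv : f v = f a₀ := (hSuniv ▸ Set.mem_univ v : v ∈ S).self_of_nhds
  exact huv (hu.trans hv.symm)

lemma seq_build (F : ℕ → ℂ → OnePoint ℂ) (f : ℂ → OnePoint ℂ) (a₀ : ℂ) (r : ℝ) (hr : 0 < r)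
    (H : ∀ ρ : ℝ, 0 < ρ → ρ ≤ r → ∃ N, ∀ n ≥ N, ∃ z, dist z a₀ ≤ ρ ∧ F n z = f a₀) :
    ∃ (N : ℕ) (a : ℕ → ℂ), (∀ n ≥ N, F n (a n) = f a₀) ∧
      Filter.Tendsto a Filter.atTop (nhds a₀) := by
  classical
  choose N₀ hN₀ using fun k : ℕ => H (r / ((k : ℝ) + 1)) (by positivity)
    (div_le_self hr.le (le_add_of_nonneg_left (Nat.cast_nonneg k)))
  obtain ⟨N', hN'0, hN'succ⟩ : ∃ N' : ℕ → ℕ, N' 0 = N₀ 0 ∧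
      ∀ k, N' (k + 1) = max (N' k + 1) (N₀ (k + 1)) :=
    ⟨fun k => Nat.rec (N₀ 0) (fun k ih => max (ih + 1) (N₀ (k + 1))) k, rfl, fun _ => rfl⟩
  have hN'mono : StrictMono N' := strictMono_nat_of_lt_succ fun k => by
    rw [hN'succ]; exact lt_of_lt_of_le (Nat.lt_succ_self _) (le_max_left _ _)
  have hN'ge : ∀ k, N₀ k ≤ N' k := by
    intro k
    cases k with
    | zero => rw [hN'0]
    | succ k => rw [hN'succ]; exact le_max_right _ _
  obtain ⟨K, hKdef⟩ : ∃ K : ℕ → ℕ, ∀ n, K n = Nat.findGreatest (fun k => N' k ≤ n) n :=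
    ⟨_, fun _ => rfl⟩
  obtain ⟨a, hadef⟩ : ∃ a : ℕ → ℂ, ∀ n, a n =
      if hn : ∃ z, dist z a₀ ≤ r / ((K n : ℝ) + 1) ∧ F n z = f a₀ then hn.choose else a₀ :=
    ⟨_, fun _ => rfl⟩
  have hmain : ∀ n, N' 0 ≤ n → F n (a n) = f a₀ ∧ dist (a n) a₀ ≤ r / ((K n : ℝ) + 1) := by
    intro n hn
    have h1 : N' (K n) ≤ n := by
      rw [hKdef]
      exact Nat.findGreatest_spec (P := fun k => N' k ≤ n) (Nat.zero_le n) hn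
    have h2 : N₀ (K n) ≤ n := le_trans (hN'ge _) h1
    obtain ⟨z, hz1, hz2⟩ := hN₀ (K n) n h2
    have hex : ∃ z, dist z a₀ ≤ r / ((K n : ℝ) + 1) ∧ F n z = f a₀ := ⟨z, hz1, hz2⟩
    rw [hadef, dif_pos hex]
    exact ⟨hex.choose_spec.2, hex.choose_spec.1⟩
  refine ⟨N' 0, a, fun n hn => (hmain n hn).1, ?_⟩
  rw [tendsto_iff_dist_tendsto_zero]
  apply squeeze_zero' (Filter.Eventually.of_forall fun n => dist_nonneg)
    (Filter.eventually_atTop.mpr ⟨N' 0, fun n hn => (hmain n hn).2⟩)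
  have hKtop : Filter.Tendsto K Filter.atTop Filter.atTop := by
    apply Filter.tendsto_atTop.mpr
    intro k₀
    rw [Filter.eventually_atTop]
    refine ⟨N' k₀, fun n hn => ?_⟩
    rw [hKdef]
    exact Nat.le_findGreatest (le_trans (hN'mono.le_apply) hn) hn
  have hbase : Filter.Tendsto (fun m : ℕ => r / (m : ℝ)) Filter.atTop (nhds 0) :=
    tendsto_const_div_atTop_nhds_zero_nat r
  have h2 : Filter.Tendsto (fun n => K n + 1) Filter.atTop Filter.atTop :=
    (Filter.tendsto_add_atTop_nat 1).comp hKtop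
  have h3 := hbase.comp h2
  refine h3.congr fun n => ?_
  simp only [Function.comp_apply]
  push_cast
  ring

lemma key (f : ℂ → OnePoint ℂ) (F : ℕ → ℂ → OnePoint ℂ)
    (hf : SphMeromorphic f) (hF : ∀ n, SphMeromorphic (F n))
    (hnc : ∃ u v : ℂ, f u ≠ f v)
    (hconv : ∀ z₀ : ℂ, ∃ U ∈ nhds z₀, ∀ ε : ℝ, 0 < ε → ∃ N : ℕ,
      ∀ n ≥ N, ∀ z ∈ U, sphDist (F n z) (f z) < ε)
    (a₀ : ℂ) (hfin : f a₀ ≠ OnePoint.infty) :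
    ∃ (N : ℕ) (a : ℕ → ℂ),
      (∀ n ≥ N, F n (a n) = f a₀) ∧
      Filter.Tendsto a Filter.atTop (nhds a₀) := by
  obtain ⟨hfc_an, hfev⟩ := fin_analytic hf hfin
  set fc : ℂ → ℂ := fun z => toC (f z) with hfc
  set w₀ : ℂ := fc a₀ with hw₀
  have hfa : f a₀ = OnePoint.some w₀ := eq_some_toC hfin
  -- fc - w₀ not eventually zero at a₀
  have hq : ¬ ∀ᶠ z in nhds a₀, fc z - w₀ = 0 := by
    intro hev0
    apply not_loc_const hf hnc a₀
    filter_upwards [hev0, hfev] with z h1 h2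
    rw [h2, hfa]
    exact congrArg _ (sub_eq_zero.mp h1)
  have hiso : ∀ᶠ z in nhdsWithin a₀ {a₀}ᶜ, fc z - w₀ ≠ 0 :=
    ((hfc_an.sub analyticAt_const).eventually_eq_zero_or_eventually_ne_zero).resolve_left hq
  obtain ⟨U, hU, hUconv⟩ := hconv a₀
  have hUev : ∀ᶠ z in nhds a₀, z ∈ U := hU
  rw [eventually_nhdsWithin_iff] at hiso
  have hall : ∀ᶠ z in nhds a₀,
      (f z = OnePoint.some (fc z) ∧ z ∈ U) ∧ (z ∈ ({a₀}ᶜ : Set ℂ) → fc z - w₀ ≠ 0) :=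
    (hfev.and hUev).and hiso
  rw [Metric.eventually_nhds_iff] at hall
  obtain ⟨ε, hε, hball⟩ := hall
  set r : ℝ := ε / 2 with hrdef
  have hr : 0 < r := by positivity
  have hBall : ∀ z, dist z a₀ ≤ r →
      (f z = OnePoint.some (fc z) ∧ z ∈ U) ∧ (z ≠ a₀ → fc z - w₀ ≠ 0) := by
    intro z hz
    have := hball (show dist z a₀ < ε by rw [hrdef] at hz; linarith)
    exact ⟨this.1, fun hne => this.2 hne⟩
  -- fc analytic on closed ball
  have hfc_on : ∀ z ∈ Metric.closedBall a₀ r, AnalyticAt ℂ fc z := by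
    intro z hz
    refine (fin_analytic hf ?_).1
    rw [(hBall z (Metric.mem_closedBall.mp hz)).1.1]
    simp
  -- bound M
  obtain ⟨M, hM⟩ := (isCompact_closedBall a₀ r).exists_bound_of_continuousOn
    (fun z hz => ((hfc_on z hz).continuousAt).continuousWithinAt)
  have hM0 : 0 ≤ M :=
    le_trans (norm_nonneg _) (hM a₀ (Metric.mem_closedBall_self hr.le))
  have hMabs : ∀ z ∈ Metric.closedBall a₀ r, ‖fc z‖ ≤ M := by
    intro z hz; exact hM z hz
  set C : ℝ := Real.sqrt (1 + (2 * M + 1) ^ 2) * Real.sqrt (1 + M ^ 2) / 2 with hC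
  have hCpos : 0 < C := by
    rw [hC]; positivity
  set ε₀ : ℝ := 1 / Real.sqrt (1 + M ^ 2) with hε₀
  have hε₀pos : 0 < ε₀ := by rw [hε₀]; positivity
  apply seq_build F f a₀ r hr
  intro ρ hρ hρr
  -- minimum of |fc - w₀| on the sphere of radius ρ
  have hsphne : (Metric.sphere a₀ ρ).Nonempty := NormedSpace.sphere_nonempty.mpr hρ.le
  have hsub : Metric.sphere a₀ ρ ⊆ Metric.closedBall a₀ r := fun z hz =>
    Metric.mem_closedBall.mpr (le_trans (le_of_eq (Metric.mem_sphere.mp hz)) hρr)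
  obtain ⟨z₀, hz₀s, hz₀min⟩ := (isCompact_sphere a₀ ρ).exists_isMinOn hsphne
    (f := fun z => ‖fc z - w₀‖)
    (fun z hz => (((hfc_on z (hsub hz)).continuousAt.sub continuousAt_const).norm).continuousWithinAt)
  set δ : ℝ := ‖fc z₀ - w₀‖ with hδdef
  have hδ : 0 < δ := by
    rw [hδdef, norm_pos_iff]
    apply (hBall z₀ (Metric.mem_closedBall.mp (hsub hz₀s))).2
    intro he
    have : dist z₀ a₀ = ρ := Metric.mem_sphere.mp hz₀s
    rw [he, dist_self] at this
    exact hρ.ne this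
  have hδmin : ∀ z ∈ Metric.sphere a₀ ρ, δ ≤ ‖fc z - w₀‖ := fun z hz => hz₀min hz
  set εn : ℝ := min ε₀ (δ / (3 * C)) with hεn
  have hεnpos : 0 < εn := lt_min hε₀pos (by positivity)
  obtain ⟨N, hN⟩ := hUconv εn hεnpos
  refine ⟨N, fun n hn => ?_⟩
  have hclose : ∀ z ∈ Metric.closedBall a₀ r, sphDist (F n z) (f z) < εn := fun z hz =>
    hN n hn z (hBall z (Metric.mem_closedBall.mp hz)).1.2
  have hfin' : ∀ z ∈ Metric.closedBall a₀ r,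
      F n z ≠ OnePoint.infty ∧ ‖toC (F n z)‖ ≤ 2 * M + 1 := by
    intro z hz
    have h1 := hclose z hz
    rw [(hBall z (Metric.mem_closedBall.mp hz)).1.1] at h1
    exact stepA hM0 (hMabs z hz) (lt_of_lt_of_le h1 (min_le_left _ _))
  set Fc : ℂ → ℂ := fun z => toC (F n z) with hFcdef
  have hFc_on : ∀ z ∈ Metric.closedBall a₀ r, AnalyticAt ℂ Fc z := fun z hz =>
    (fin_analytic (hF n) (hfin' z hz).1).1
  have heuc : ∀ z ∈ Metric.closedBall a₀ r, ‖Fc z - fc z‖ ≤ δ / 3 := by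
    intro z hz
    have h1 : ‖Fc z - fc z‖ ≤
        sphDist (OnePoint.some (Fc z)) (OnePoint.some (fc z))
          * (Real.sqrt (1 + (2 * M + 1) ^ 2) * Real.sqrt (1 + M ^ 2)) / 2 :=
      stepB (hfin' z hz).2 (hMabs z hz)
    have h2 : OnePoint.some (Fc z) = F n z := (eq_some_toC (hfin' z hz).1).symm
    have h3 : OnePoint.some (fc z) = f z := ((hBall z (Metric.mem_closedBall.mp hz)).1.1).symm
    rw [h2, h3] at h1
    have h4 : sphDist (F n z) (f z) * (Real.sqrt (1 + (2 * M + 1) ^ 2) * Real.sqrt (1 + M ^ 2)) / 2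
        ≤ εn * C := by
      have hS : (0:ℝ) ≤ Real.sqrt (1 + (2 * M + 1) ^ 2) * Real.sqrt (1 + M ^ 2) := by positivity
      calc sphDist (F n z) (f z) * (Real.sqrt (1 + (2 * M + 1) ^ 2) * Real.sqrt (1 + M ^ 2)) / 2
          ≤ εn * (Real.sqrt (1 + (2 * M + 1) ^ 2) * Real.sqrt (1 + M ^ 2)) / 2 := by
            gcongr
            exact (hclose z hz).le
        _ = εn * C := by rw [hC]; ring
    have h5 : εn * C ≤ δ / 3 := by
      have h6 : εn ≤ δ / (3 * C) := min_le_right _ _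
      calc εn * C ≤ (δ / (3 * C)) * C := mul_le_mul_of_nonneg_right h6 hCpos.le
        _ = δ / 3 := by field_simp
    linarith
  -- suppose no solution in the closed ball of radius ρ
  by_contra hcon
  push_neg at hcon
  have hρsub : Metric.closedBall a₀ ρ ⊆ Metric.closedBall a₀ r :=
    Metric.closedBall_subset_closedBall hρr
  have hnz : ∀ z ∈ Metric.closedBall a₀ ρ, Fc z - w₀ ≠ 0 := by
    intro z hz h0
    apply hcon z (Metric.mem_closedBall.mp hz)
    rw [eq_some_toC (hfin' z (hρsub hz)).1, hfa]
    exact congrArg _ (sub_eq_zero.mp h0)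
  -- minimum modulus principle
  have hclosure : closure (Metric.ball a₀ ρ) = Metric.closedBall a₀ ρ := closure_ball a₀ hρ.ne'
  have hfrontier : frontier (Metric.ball a₀ ρ) = Metric.sphere a₀ ρ := frontier_ball a₀ hρ.ne'
  have hdiff : DiffContOnCl ℂ (fun z => (Fc z - w₀)⁻¹) (Metric.ball a₀ ρ) := by
    constructor
    · intro z hz
      exact (((hFc_on z (hρsub (Metric.ball_subset_closedBall hz))).differentiableAt.sub_const
        w₀).inv (hnz z (Metric.ball_subset_closedBall hz))).differentiableWithinAt
    · rw [hclosure]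
      intro z hz
      exact (((hFc_on z (hρsub hz)).differentiableAt.sub_const w₀).inv
        (hnz z hz)).continuousAt.continuousWithinAt
  have hbound : ∀ z ∈ frontier (Metric.ball a₀ ρ), ‖(Fc z - w₀)⁻¹‖ ≤ 3 / (2 * δ) := by
    rw [hfrontier]
    intro z hz
    have h1 : δ ≤ ‖fc z - w₀‖ := hδmin z hz
    have h2 : ‖Fc z - fc z‖ ≤ δ / 3 := by
      exact heuc z (hsub hz)
    have h3 : 2 * δ / 3 ≤ ‖Fc z - w₀‖ := by
      have := norm_sub_norm_le (fc z - w₀) (fc z - Fc z)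
      have h4 : ‖fc z - Fc z‖ = ‖Fc z - fc z‖ := norm_sub_rev _ _
      have h5 : (fc z - w₀) - (fc z - Fc z) = Fc z - w₀ := by ring
      rw [h4, h5] at this
      linarith
    rw [norm_inv]
    have h6 : 0 < ‖Fc z - w₀‖ := lt_of_lt_of_le (by linarith) h3
    calc ‖Fc z - w₀‖⁻¹ ≤ (2 * δ / 3)⁻¹ := by
          apply inv_anti₀ (by positivity) h3
      _ = 3 / (2 * δ) := by rw [inv_div]
  have ha₀mem : a₀ ∈ closure (Metric.ball a₀ ρ) := by
    rw [hclosure]; exact Metric.mem_closedBall_self hρ.le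
  have hmax := Complex.norm_le_of_forall_mem_frontier_norm_le
    (Metric.isBounded_ball) hdiff hbound ha₀mem
  -- contradiction
  have h7 : Fc a₀ - w₀ ≠ 0 := hnz a₀ (Metric.mem_closedBall_self hρ.le)
  have h8 : 0 < ‖Fc a₀ - w₀‖ := norm_pos_iff.mpr h7
  rw [norm_inv] at hmax
  have h9 : 2 * δ / 3 ≤ ‖Fc a₀ - w₀‖ := by
    have h10 : 0 < 3 / (2 * δ) := by positivity
    have h12 := mul_le_mul_of_nonneg_right hmax h8.le
    rw [inv_mul_cancel₀ h8.ne', div_mul_eq_mul_div, le_div_iff₀ (by positivity : (0:ℝ) < 2 * δ)] at h12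
    linarith
  have h11 : ‖Fc a₀ - w₀‖ ≤ δ / 3 := by
    have := heuc a₀ (Metric.mem_closedBall_self hr.le)
    rw [← hw₀] at this
    exact this
  linarith

lemma inv1_injective : Function.Injective inv1 := fun x y hxy => by
  rw [← inv1_inv1 x, ← inv1_inv1 y, hxy]

/-- Hurwitz-type theorem: if meromorphic functions `f_n : ℂ → ℂ̂` converge locally
uniformly (in the spherical metric) to a non-constant meromorphic function `f`, then for
every `a₀ ∈ ℂ` there are `N ∈ ℕ` and points `a_n → a₀` with `f_n(a_n) = f(a₀)` for all
`n ≥ N`. -/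
theorem stmt18 (f : ℂ → OnePoint ℂ) (F : ℕ → ℂ → OnePoint ℂ)
    (hf : SphMeromorphic f) (hF : ∀ n, SphMeromorphic (F n))
    (hnc : ∃ u v : ℂ, f u ≠ f v)
    (hconv : ∀ z₀ : ℂ, ∃ U ∈ nhds z₀, ∀ ε : ℝ, 0 < ε → ∃ N : ℕ,
      ∀ n ≥ N, ∀ z ∈ U, sphDist (F n z) (f z) < ε)
    (a₀ : ℂ) :
    ∃ (N : ℕ) (a : ℕ → ℂ),
      (∀ n ≥ N, F n (a n) = f a₀) ∧
      Filter.Tendsto a Filter.atTop (nhds a₀) := by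
  by_cases hfin : f a₀ ≠ OnePoint.infty
  · exact key f F hf hF hnc hconv a₀ hfin
  · push_neg at hfin
    obtain ⟨u, v, huv⟩ := hnc
    have hnc' : ∃ u v : ℂ, inv1 (f u) ≠ inv1 (f v) :=
      ⟨u, v, fun h => huv (inv1_injective h)⟩
    have hconv' : ∀ z₀ : ℂ, ∃ U ∈ nhds z₀, ∀ ε : ℝ, 0 < ε → ∃ N : ℕ,
        ∀ n ≥ N, ∀ z ∈ U, sphDist (inv1 (F n z)) (inv1 (f z)) < ε := by
      intro z₀
      obtain ⟨U, hU, hc⟩ := hconv z₀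
      exact ⟨U, hU, fun ε hε => by
        obtain ⟨N, hN⟩ := hc ε hε
        exact ⟨N, fun n hn z hz => by rw [sphDist_inv1]; exact hN n hn z hz⟩⟩
    have hfin' : inv1 (f a₀) ≠ OnePoint.infty := by
      rw [hfin]; simp [inv1]
    obtain ⟨N, a, h1, h2⟩ := key (fun z => inv1 (f z)) (fun n z => inv1 (F n z))
      (inv1_meromorphic hf) (fun n => inv1_meromorphic (hF n)) hnc' hconv' a₀ hfin'
    exact ⟨N, a, fun n hn => inv1_injective (h1 n hn), h2⟩
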